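/- Let N ≥ 2 be an integer and L > 0. The following are equivalent: (i) there exist λ ∈ ℂ and functions φ₁, …, φ_N : ℝ → ℂ, not all identically zero on [0,L], each satisfying the KdV spectral ODE with parameter λ on [0,L], with the boundary conditions φ_j(0) = φ₁(0) for all j, Σ_{j=1}^N φ_j''(0) = 0, and φ_j(L) = 0, φ_j'(0) = 0, φ_j''(L) = 0 for all j; (ii) L belongs to 𝒩* ∪ 𝒩†. -/

import Mathlib

/-- A function `φ : ℝ → ℂ` satisfies the KdV spectral ODE with parameter `lam` on `[0, L]`:
it is three times continuously differentiable and `lam·φ + φ' + φ''' = 0` on `[0, L]`. -/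
def KdVSpectralODE (lam : ℂ) (L : ℝ) (φ : ℝ → ℂ) : Prop :=
  ContDiff ℝ 3 φ ∧
    ∀ x ∈ Set.Icc (0 : ℝ) L, lam * φ x + deriv φ x + iteratedDeriv 3 φ x = 0

/-- The critical set 𝒩* of Glass and Guerrero. -/
def criticalNStar : Set ℝ :=
  {L : ℝ | 0 < L ∧ ∃ a b : ℂ,
    a * Complex.exp a = b * Complex.exp b ∧
    b * Complex.exp b = -(a + b) * Complex.exp (-(a + b)) ∧
    (L : ℂ) ^ 2 = -(a ^ 2 + a * b + b ^ 2)}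

/-- The new critical set 𝒩†. -/
def criticalNDagger : Set ℝ :=
  {L : ℝ | 0 < L ∧ ∃ a b : ℂ,
    a ^ 2 * Complex.exp a = b ^ 2 * Complex.exp b ∧
    b ^ 2 * Complex.exp b = (a + b) ^ 2 * Complex.exp (-(a + b)) ∧
    (L : ℂ) ^ 2 = -(a ^ 2 + a * b + b ^ 2)}

section KdVAux
open Set Complex

/-- Derivative of `x ↦ exp (μ x)` as a function `ℝ → ℂ`. -/
lemma hasDerivAt_cexp_mul (μ : ℂ) (x : ℝ) :
    HasDerivAt (fun t : ℝ => Complex.exp (μ * t)) (μ * Complex.exp (μ * x)) x := by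
  have h1 : HasDerivAt (fun t : ℝ => (t : ℂ)) 1 x := by
    simpa using (hasDerivAt_id x).ofReal_comp
  have h2 : HasDerivAt (fun t : ℝ => μ * (t : ℂ)) μ x := by
    simpa using h1.const_mul μ
  simpa [mul_comm] using h2.cexp

/-- First-order linear ODE uniqueness on an interval. -/
lemma ode1_eq (μ : ℂ) {L : ℝ} (hL : 0 ≤ L) {f : ℝ → ℂ}
    (hf : ∀ x ∈ Icc (0 : ℝ) L, HasDerivAt f (μ * f x) x) :
    ∀ x ∈ Icc (0 : ℝ) L, f x = f 0 * Complex.exp (μ * x) := by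
  set g : ℝ → ℂ := fun x => f x * Complex.exp (-μ * x) with hg
  have hgd : ∀ x ∈ Ico (0:ℝ) L, HasDerivWithinAt g 0 (Ici x) x := by
    intro x hx
    have hx' : x ∈ Icc (0:ℝ) L := ⟨hx.1, le_of_lt hx.2⟩
    have := ((hf x hx').mul (hasDerivAt_cexp_mul (-μ) x))
    have h0 : μ * f x * Complex.exp (-μ * x) + f x * (-μ * Complex.exp (-μ * x)) = 0 := by ring
    rw [h0] at this
    exact this.hasDerivWithinAt
  have hgc : ContinuousOn g (Icc 0 L) := by
    intro x hx
    exact (((hf x hx).mul (hasDerivAt_cexp_mul (-μ) x)).continuousAt).continuousWithinAt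
  have hconst := constant_of_has_deriv_right_zero hgc hgd
  intro x hx
  have := hconst x hx
  have h0 : g 0 = f 0 := by simp [hg]
  rw [h0] at this
  have hne : Complex.exp (-μ * x) ≠ 0 := Complex.exp_ne_zero _
  have heq : f x * Complex.exp (-μ * x) = f 0 := by
    simpa [hg] using this
  have : f x * Complex.exp (-μ * x) * Complex.exp (μ * x)
      = f 0 * Complex.exp (μ * x) := by rw [heq]
  rwa [mul_assoc, ← Complex.exp_add, neg_mul, neg_add_cancel, Complex.exp_zero, mul_one] at this


section deriv

lemma hd0 {ψ : ℝ → ℂ} (hψ : ContDiff ℝ 3 ψ) (x : ℝ) : HasDerivAt ψ (deriv ψ x) x :=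
  ((hψ.differentiable_iteratedDeriv 0 (by norm_num)).differentiableAt (x := x)).hasDerivAt.congr_deriv (by simp)

lemma hd1 {ψ : ℝ → ℂ} (hψ : ContDiff ℝ 3 ψ) (x : ℝ) : HasDerivAt (deriv ψ) (iteratedDeriv 2 ψ x) x := by
  have h := ((hψ.differentiable_iteratedDeriv 1 (by norm_num)) x).hasDerivAt
  rw [iteratedDeriv_one] at h
  have e2 : iteratedDeriv 2 ψ = deriv (iteratedDeriv 1 ψ) := iteratedDeriv_succ
  rw [e2, iteratedDeriv_one]
  exact h

lemma hd2 {ψ : ℝ → ℂ} (hψ : ContDiff ℝ 3 ψ) (x : ℝ) : HasDerivAt (iteratedDeriv 2 ψ) (iteratedDeriv 3 ψ x) x := by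
  have h := ((hψ.differentiable_iteratedDeriv 2 (by norm_num)) x).hasDerivAt
  have e3 : iteratedDeriv 3 ψ = deriv (iteratedDeriv 2 ψ) := iteratedDeriv_succ
  rw [e3]
  exact h

end deriv

/-- The key factorization: if `μ³ + μ + λ = 0` then `θ = ψ'' + μψ' + (1+μ²)ψ`
satisfies `θ' = μ θ` on `[0,L]`. -/
lemma theta_hasDerivAt {lam : ℂ} {L : ℝ} {ψ : ℝ → ℂ} (h : KdVSpectralODE lam L ψ)
    {μ : ℂ} (hμ : μ ^ 3 + μ + lam = 0) (x : ℝ) (hx : x ∈ Icc (0:ℝ) L) :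
    HasDerivAt (fun t => iteratedDeriv 2 ψ t + μ * deriv ψ t + (1 + μ ^ 2) * ψ t)
      (μ * (iteratedDeriv 2 ψ x + μ * deriv ψ x + (1 + μ ^ 2) * ψ x)) x := by
  obtain ⟨hc, hode⟩ := h
  have H := ((hd2 hc x).add ((hd1 hc x).const_mul μ)).add ((hd0 hc x).const_mul (1 + μ ^ 2))
  refine H.congr_deriv ?_
  have h3 : iteratedDeriv 3 ψ x = -(lam * ψ x) - deriv ψ x := by
    have := hode x hx; linear_combination this
  rw [h3]; linear_combination (-(ψ x)) * hμ

lemma theta_eq {lam : ℂ} {L : ℝ} {ψ : ℝ → ℂ} (h : KdVSpectralODE lam L ψ)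
    {μ : ℂ} (hμ : μ ^ 3 + μ + lam = 0) (hL : (0:ℝ) ≤ L) :
    ∀ x ∈ Icc (0:ℝ) L,
      iteratedDeriv 2 ψ x + μ * deriv ψ x + (1 + μ ^ 2) * ψ x
        = (iteratedDeriv 2 ψ 0 + μ * deriv ψ 0 + (1 + μ ^ 2) * ψ 0) * Complex.exp (μ * x) := by
  have := ode1_eq μ hL (f := fun t => iteratedDeriv 2 ψ t + μ * deriv ψ t + (1 + μ ^ 2) * ψ t)
    (fun x hx => theta_hasDerivAt h hμ x hx)
  simpa using this


lemma iteratedDeriv_two_eq {f : ℝ → ℂ} : iteratedDeriv 2 f = deriv (deriv f) := by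
  rw [iteratedDeriv_succ, iteratedDeriv_one]

lemma iteratedDeriv_three_eq {f : ℝ → ℂ} : iteratedDeriv 3 f = deriv (deriv (deriv f)) := by
  rw [iteratedDeriv_succ, iteratedDeriv_two_eq]

section smul
variable {ψ : ℝ → ℂ} (hc : ContDiff ℝ 3 ψ) (c : ℂ)

lemma deriv_cmul (hc : ContDiff ℝ 3 ψ) (c : ℂ) :
    deriv (fun x => c * ψ x) = fun x => c * deriv ψ x := by
  funext x
  exact deriv_const_mul c ((hc.differentiable (by norm_num)) x)

lemma deriv2_cmul (hc : ContDiff ℝ 3 ψ) (c : ℂ) :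
    iteratedDeriv 2 (fun x => c * ψ x) = fun x => c * iteratedDeriv 2 ψ x := by
  rw [iteratedDeriv_two_eq, deriv_cmul hc c]
  funext x
  have h1 : DifferentiableAt ℝ (deriv ψ) x := by
    have := (hc.differentiable_iteratedDeriv 1 (by norm_num)) x
    rwa [iteratedDeriv_one] at this
  rw [deriv_const_mul c h1, iteratedDeriv_two_eq]

lemma deriv3_cmul (hc : ContDiff ℝ 3 ψ) (c : ℂ) :
    iteratedDeriv 3 (fun x => c * ψ x) = fun x => c * iteratedDeriv 3 ψ x := by
  have h2 : iteratedDeriv 3 (fun x => c * ψ x) = deriv (iteratedDeriv 2 (fun x => c * ψ x)) :=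
    iteratedDeriv_succ
  rw [h2, deriv2_cmul hc c]
  funext x
  have h1 : DifferentiableAt ℝ (iteratedDeriv 2 ψ) x :=
    (hc.differentiable_iteratedDeriv 2 (by norm_num)) x
  rw [deriv_const_mul c h1]
  congr 1
  exact (iteratedDeriv_succ (n := 2) (f := ψ)).symm ▸ rfl

lemma KdV_cmul {lam : ℂ} {L : ℝ} (h : KdVSpectralODE lam L ψ) (c : ℂ) :
    KdVSpectralODE lam L (fun x => c * ψ x) := by
  obtain ⟨h1, h2⟩ := h
  refine ⟨contDiff_const.mul h1, fun x hx => ?_⟩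
  rw [deriv_cmul h1 c, deriv3_cmul h1 c]
  have := h2 x hx
  linear_combination c * this

end smul

/-- If a differentiable function vanishes on `[0, L]`, its derivative vanishes there too. -/
lemma deriv_zero_of_zero_on_Icc {f : ℝ → ℂ} {L : ℝ} (hL : 0 < L)
    (hf : Differentiable ℝ f) (hz : ∀ x ∈ Icc (0:ℝ) L, f x = 0) :
    ∀ x ∈ Icc (0:ℝ) L, deriv f x = 0 := by
  intro x hx
  have hu : UniqueDiffWithinAt ℝ (Icc (0:ℝ) L) x := uniqueDiffOn_Icc hL x hx
  have h1 : HasDerivWithinAt f (deriv f x) (Icc (0:ℝ) L) x :=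
    (hf x).hasDerivAt.hasDerivWithinAt
  have h2 : HasDerivWithinAt f 0 (Icc (0:ℝ) L) x := by
    have : HasDerivWithinAt (fun _ : ℝ => (0 : ℂ)) 0 (Icc (0:ℝ) L) x :=
      (hasDerivWithinAt_const x _ 0)
    exact this.congr (fun y hy => (hz y hy)) ((hz x hx))
  rw [← h1.derivWithin hu, h2.derivWithin hu]


/-- The reduced single-function eigenvalue problem. -/
def ReducedPb (L : ℝ) : Prop :=
  ∃ lam : ℂ, ∃ ψ : ℝ → ℂ, KdVSpectralODE lam L ψ ∧ deriv ψ 0 = 0 ∧ ψ L = 0 ∧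
    iteratedDeriv 2 ψ L = 0 ∧ (∃ x ∈ Icc (0:ℝ) L, ψ x ≠ 0) ∧
    (ψ 0 = 0 ∨ iteratedDeriv 2 ψ 0 = 0)

section sub
variable {f g : ℝ → ℂ}

lemma deriv_sub' (hf : ContDiff ℝ 3 f) (hg : ContDiff ℝ 3 g) :
    deriv (fun x => f x - g x) = fun x => deriv f x - deriv g x := by
  funext x
  exact deriv_sub ((hf.differentiable (by norm_num)) x) ((hg.differentiable (by norm_num)) x)

lemma deriv2_sub' (hf : ContDiff ℝ 3 f) (hg : ContDiff ℝ 3 g) :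
    iteratedDeriv 2 (fun x => f x - g x) = fun x => iteratedDeriv 2 f x - iteratedDeriv 2 g x := by
  rw [iteratedDeriv_two_eq, deriv_sub' hf hg]
  funext x
  have h1 : DifferentiableAt ℝ (deriv f) x := by
    have := (hf.differentiable_iteratedDeriv 1 (by norm_num)) x; rwa [iteratedDeriv_one] at this
  have h2 : DifferentiableAt ℝ (deriv g) x := by
    have := (hg.differentiable_iteratedDeriv 1 (by norm_num)) x; rwa [iteratedDeriv_one] at this
  rw [deriv_fun_sub h1 h2, iteratedDeriv_two_eq, iteratedDeriv_two_eq]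

lemma deriv3_sub' (hf : ContDiff ℝ 3 f) (hg : ContDiff ℝ 3 g) :
    iteratedDeriv 3 (fun x => f x - g x) = fun x => iteratedDeriv 3 f x - iteratedDeriv 3 g x := by
  have h2 : iteratedDeriv 3 (fun x => f x - g x) = deriv (iteratedDeriv 2 (fun x => f x - g x)) :=
    iteratedDeriv_succ
  rw [h2, deriv2_sub' hf hg]
  funext x
  have h1 : DifferentiableAt ℝ (iteratedDeriv 2 f) x := (hf.differentiable_iteratedDeriv 2 (by norm_num)) x
  have h2' : DifferentiableAt ℝ (iteratedDeriv 2 g) x := (hg.differentiable_iteratedDeriv 2 (by norm_num)) x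
  rw [deriv_fun_sub h1 h2']
  have e1 : iteratedDeriv 3 f = deriv (iteratedDeriv 2 f) := iteratedDeriv_succ
  have e2 : iteratedDeriv 3 g = deriv (iteratedDeriv 2 g) := iteratedDeriv_succ
  rw [e1, e2]

lemma KdV_sub {lam : ℂ} {L : ℝ} (hf : KdVSpectralODE lam L f) (hg : KdVSpectralODE lam L g) :
    KdVSpectralODE lam L (fun x => f x - g x) := by
  obtain ⟨hf1, hf2⟩ := hf; obtain ⟨hg1, hg2⟩ := hg
  refine ⟨hf1.sub hg1, fun x hx => ?_⟩
  rw [deriv_sub' hf1 hg1, deriv3_sub' hf1 hg1]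
  linear_combination hf2 x hx - hg2 x hx

end sub

lemma claimA1 (N : ℕ) (hN : 2 ≤ N) (L : ℝ) (hL : 0 < L)
    (h : ∃ lam : ℂ, ∃ φ : Fin N → ℝ → ℂ,
      (∀ j, KdVSpectralODE lam L (φ j)) ∧
      (∀ j, φ j 0 = φ ⟨0, Nat.lt_of_lt_of_le (by norm_num) hN⟩ 0) ∧
      (∑ j, iteratedDeriv 2 (φ j) 0) = 0 ∧
      (∀ j, φ j L = 0) ∧
      (∀ j, deriv (φ j) 0 = 0) ∧
      (∀ j, iteratedDeriv 2 (φ j) L = 0) ∧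
      (∃ j, ∃ x ∈ Set.Icc (0 : ℝ) L, φ j x ≠ 0)) : ReducedPb L := by
  obtain ⟨lam, φ, hK, hbc0, hsum, hbL, hd0, hb2L, j₀, x₀, hx₀, hne⟩ := h
  set z : Fin N := ⟨0, Nat.lt_of_lt_of_le (by norm_num) hN⟩ with hz
  by_cases h0 : φ z 0 = 0
  · exact ⟨lam, φ j₀, hK j₀, hd0 j₀, hbL j₀, hb2L j₀, ⟨x₀, hx₀, hne⟩,
      Or.inl ((hbc0 j₀).trans h0)⟩
  · by_cases hall : ∀ j, iteratedDeriv 2 (φ j) 0 = iteratedDeriv 2 (φ z) 0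
    · have hsum' : (N : ℂ) * iteratedDeriv 2 (φ z) 0 = 0 := by
        rw [← hsum, Finset.sum_congr rfl (fun j _ => hall j), Finset.sum_const,
          Finset.card_univ, Fintype.card_fin, nsmul_eq_mul]
      have hN0 : (N : ℂ) ≠ 0 := Nat.cast_ne_zero.2 (by omega)
      have h2 : iteratedDeriv 2 (φ j₀) 0 = 0 := (hall j₀).trans
        ((mul_eq_zero.1 hsum').resolve_left hN0)
      exact ⟨lam, φ j₀, hK j₀, hd0 j₀, hbL j₀, hb2L j₀, ⟨x₀, hx₀, hne⟩, Or.inr h2⟩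
    · push_neg at hall
      obtain ⟨k, hk⟩ := hall
      refine ⟨lam, fun x => φ k x - φ z x, KdV_sub (hK k) (hK z), ?_, ?_, ?_, ?_, ?_⟩
      · rw [deriv_sub' (hK k).1 (hK z).1]; simp [hd0 k, hd0 z]
      · simp [hbL k, hbL z]
      · rw [deriv2_sub' (hK k).1 (hK z).1]; simp [hb2L k, hb2L z]
      · by_contra hcon
        push_neg at hcon
        have hdiff : ContDiff ℝ 3 (fun x => φ k x - φ z x) := (hK k).1.sub (hK z).1
        have hdz := deriv_zero_of_zero_on_Icc hL (hdiff.differentiable (by norm_num)) hcon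
        have hdd : deriv (fun x => φ k x - φ z x) 0 = 0 ∧
            iteratedDeriv 2 (fun x => φ k x - φ z x) 0 = 0 := by
          constructor
          · exact hdz 0 ⟨le_refl 0, hL.le⟩
          · rw [iteratedDeriv_two_eq]
            have h1 : Differentiable ℝ (deriv (fun x => φ k x - φ z x)) := by
              have := hdiff.differentiable_iteratedDeriv 1 (by norm_num)
              rwa [iteratedDeriv_one] at this
            exact deriv_zero_of_zero_on_Icc hL h1 hdz 0 ⟨le_refl 0, hL.le⟩
        apply hk
        have := hdd.2
        rw [deriv2_sub' (hK k).1 (hK z).1] at this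
        simpa [sub_eq_zero] using this
      · left; simp [hbc0 k, sub_eq_zero]


lemma claimA2 (N : ℕ) (hN : 2 ≤ N) (L : ℝ) (hL : 0 < L) (h : ReducedPb L) :
    ∃ lam : ℂ, ∃ φ : Fin N → ℝ → ℂ,
      (∀ j, KdVSpectralODE lam L (φ j)) ∧
      (∀ j, φ j 0 = φ ⟨0, Nat.lt_of_lt_of_le (by norm_num) hN⟩ 0) ∧
      (∑ j, iteratedDeriv 2 (φ j) 0) = 0 ∧
      (∀ j, φ j L = 0) ∧
      (∀ j, deriv (φ j) 0 = 0) ∧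
      (∀ j, iteratedDeriv 2 (φ j) L = 0) ∧
      (∃ j, ∃ x ∈ Set.Icc (0 : ℝ) L, φ j x ≠ 0) := by
  obtain ⟨lam, ψ, hK, hd0, hbL, hb2L, ⟨x₀, hx₀, hψx₀⟩, hcase⟩ := h
  rcases hcase with h0 | h2
  · -- ψ 0 = 0 : use coefficients 1, -1, 0, ..., 0
    set z : Fin N := ⟨0, Nat.lt_of_lt_of_le (by norm_num) hN⟩ with hz
    set o : Fin N := ⟨1, by omega⟩ with ho
    have hzo : z ≠ o := by simp [hz, ho, Fin.ext_iff]
    set c : Fin N → ℂ := fun j => (if j = z then (1:ℂ) else 0) + (if j = o then (-1:ℂ) else 0)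
      with hc
    have hcz : c z = 1 := by simp [hc, hzo]
    refine ⟨lam, fun j x => c j * ψ x, fun j => KdV_cmul hK (c j), ?_, ?_, ?_, ?_, ?_, ?_⟩
    · intro j; simp [h0]
    · have : ∀ j : Fin N, iteratedDeriv 2 (fun x => c j * ψ x) 0
          = c j * iteratedDeriv 2 ψ 0 := fun j => by rw [deriv2_cmul hK.1 (c j)]
      rw [Finset.sum_congr rfl (fun j _ => this j), ← Finset.sum_mul]
      have hsumc : (∑ j, c j) = 0 := by
        rw [hc]
        rw [Finset.sum_add_distrib]
        rw [Finset.sum_ite_eq' Finset.univ z (fun _ => (1:ℂ)),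
          Finset.sum_ite_eq' Finset.univ o (fun _ => (-1:ℂ))]
        simp
      rw [hsumc, zero_mul]
    · intro j; simp [hbL]
    · intro j; rw [deriv_cmul hK.1 (c j)]; simp [hd0]
    · intro j; rw [deriv2_cmul hK.1 (c j)]; simp [hb2L]
    · exact ⟨z, x₀, hx₀, by simp [hcz, hψx₀]⟩
  · -- ψ''(0) = 0 : use φ j = ψ for all j
    refine ⟨lam, fun _ => ψ, fun _ => hK, fun _ => rfl, by simp [h2], fun _ => hbL,
      fun _ => hd0, fun _ => hb2L, ⟨⟨0, Nat.lt_of_lt_of_le (by norm_num) hN⟩, x₀, hx₀, hψx₀⟩⟩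


open Polynomial in
/-- Roots of the characteristic cubic `μ³ + μ + λ = 0`, with symmetric-function facts. -/
lemma roots_exist (lam : ℂ) : ∃ μ₁ μ₂ μ₃ : ℂ,
    μ₁ + μ₂ + μ₃ = 0 ∧ μ₁ * μ₂ + μ₂ * μ₃ + μ₃ * μ₁ = 1 ∧
    μ₁ ^ 3 + μ₁ + lam = 0 ∧ μ₂ ^ 3 + μ₂ + lam = 0 ∧ μ₃ ^ 3 + μ₃ + lam = 0 := by
  have hdeg : (X ^ 3 + X + C lam : ℂ[X]).degree = 3 := by
    have h1 : (X + C lam : ℂ[X]).degree ≤ 1 := by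
      calc (X + C lam : ℂ[X]).degree ≤ max (X : ℂ[X]).degree (C lam).degree := degree_add_le _ _
      _ ≤ 1 := by
        apply max_le
        · rw [degree_X]
        · exact (degree_C_le).trans (by norm_num)
    have h2 : (X ^ 3 : ℂ[X]).degree = 3 := by
      rw [degree_X_pow]; norm_cast
    rw [add_assoc]
    rw [degree_add_eq_left_of_degree_lt]
    · exact h2
    · rw [h2]; exact lt_of_le_of_lt h1 (by norm_num)
  obtain ⟨μ₁, hμ₁⟩ := Complex.exists_root (f := X ^ 3 + X + C lam) (by rw [hdeg]; norm_num)
  have hr1 : μ₁ ^ 3 + μ₁ + lam = 0 := by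
    have := hμ₁
    simp [IsRoot, eval_add, eval_pow] at this
    linear_combination this
  obtain ⟨δ, hδ⟩ : ∃ δ : ℂ, δ ^ 2 = -3 * μ₁ ^ 2 - 4 :=
    IsAlgClosed.exists_pow_nat_eq (-3 * μ₁ ^ 2 - 4) (by norm_num)
  refine ⟨μ₁, (-μ₁ + δ) / 2, (-μ₁ - δ) / 2, by ring, by linear_combination (-1/4 : ℂ) * hδ,
    hr1, by linear_combination hr1 + ((δ - 3*μ₁)/8) * hδ, by
      linear_combination hr1 + ((-δ - 3*μ₁)/8) * hδ⟩


lemma pair_star {μ ν v w A : ℂ} (hv : v ≠ 0)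
    (h1 : μ * v = w * Complex.exp (μ * A)) (h2 : ν * v = w * Complex.exp (ν * A)) :
    (-μ * A) * Complex.exp (-μ * A) = (-ν * A) * Complex.exp (-ν * A) := by
  have hy : v * (μ * Complex.exp (ν * A) - ν * Complex.exp (μ * A)) = 0 := by
    linear_combination Complex.exp (ν * A) * h1 - Complex.exp (μ * A) * h2
  have hx : μ * Complex.exp (ν * A) - ν * Complex.exp (μ * A) = 0 :=
    (mul_eq_zero.1 hy).resolve_left hv
  rw [show -μ * A = -(μ * A) by ring, show -ν * A = -(ν * A) by ring,
    Complex.exp_neg, Complex.exp_neg, inv_eq_one_div, inv_eq_one_div,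
    mul_one_div, mul_one_div, div_eq_div_iff (Complex.exp_ne_zero _) (Complex.exp_ne_zero _)]
  linear_combination (-A) * hx

lemma pair_dagger {lam μ ν u v A : ℂ} (hu : u ≠ 0)
    (hqμ : 1 + μ ^ 2 ≠ 0) (hqν : 1 + ν ^ 2 ≠ 0)
    (hcμ : μ ^ 3 + μ + lam = 0) (hcν : ν ^ 3 + ν + lam = 0)
    (h1 : μ * v = (1 + μ ^ 2) * u * Complex.exp (μ * A))
    (h2 : ν * v = (1 + ν ^ 2) * u * Complex.exp (ν * A)) :
    (-μ * A) ^ 2 * Complex.exp (-μ * A) = (-ν * A) ^ 2 * Complex.exp (-ν * A) := by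
  have hy : (1 + μ ^ 2) * (1 + ν ^ 2) * u *
      (μ ^ 2 * Complex.exp (ν * A) - ν ^ 2 * Complex.exp (μ * A)) = 0 := by
    linear_combination (ν ^ 2 * (1 + ν ^ 2)) * h1 - (μ ^ 2 * (1 + μ ^ 2)) * h2
      + (μ * ν * v) * (hcμ - hcν)
  have hx : μ ^ 2 * Complex.exp (ν * A) - ν ^ 2 * Complex.exp (μ * A) = 0 :=
    (mul_eq_zero.1 hy).resolve_left (mul_ne_zero (mul_ne_zero hqμ hqν) hu)
  rw [show -μ * A = -(μ * A) by ring, show -ν * A = -(ν * A) by ring,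
    Complex.exp_neg, Complex.exp_neg, inv_eq_one_div, inv_eq_one_div,
    mul_one_div, mul_one_div, div_eq_div_iff (Complex.exp_ne_zero _) (Complex.exp_ne_zero _)]
  linear_combination (A ^ 2) * hx

lemma fwdB_distinct {lam : ℂ} {L : ℝ} (hL : 0 < L) {ψ : ℝ → ℂ}
    (h : KdVSpectralODE lam L ψ) {μ₁ μ₂ μ₃ : ℂ}
    (he1 : μ₁ + μ₂ + μ₃ = 0) (he2 : μ₁ * μ₂ + μ₂ * μ₃ + μ₃ * μ₁ = 1)
    (hc1 : μ₁ ^ 3 + μ₁ + lam = 0) (hc2 : μ₂ ^ 3 + μ₂ + lam = 0) (hc3 : μ₃ ^ 3 + μ₃ + lam = 0)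
    (h12 : μ₁ ≠ μ₂) (h23 : μ₂ ≠ μ₃) (h13 : μ₁ ≠ μ₃)
    (hb0 : ψ 0 = 0) (hd0 : deriv ψ 0 = 0) (hbL : ψ L = 0)
    (hb2L : iteratedDeriv 2 ψ L = 0)
    (hnt : ∃ x ∈ Icc (0:ℝ) L, ψ x ≠ 0) :
    L ∈ criticalNStar := by
  set w := iteratedDeriv 2 ψ 0 with hwdef
  set v := deriv ψ L with hvdef
  have hLm : (L:ℝ) ∈ Icc (0:ℝ) L := ⟨hL.le, le_refl L⟩
  have t1 := theta_eq h hc1 hL.le L hLm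
  have t2 := theta_eq h hc2 hL.le L hLm
  have t3 := theta_eq h hc3 hL.le L hLm
  rw [hb0, hd0, hbL, hb2L] at t1 t2 t3
  have r1 : μ₁ * v = w * Complex.exp (μ₁ * (L:ℂ)) := by linear_combination t1
  have r2 : μ₂ * v = w * Complex.exp (μ₂ * (L:ℂ)) := by linear_combination t2
  have r3 : μ₃ * v = w * Complex.exp (μ₃ * (L:ℂ)) := by linear_combination t3
  by_cases hw : w = 0
  · exfalso
    obtain ⟨x₀, hx₀, hne⟩ := hnt
    apply hne
    have s1 := theta_eq h hc1 hL.le x₀ hx₀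
    have s2 := theta_eq h hc2 hL.le x₀ hx₀
    have s3 := theta_eq h hc3 hL.le x₀ hx₀
    rw [hb0, hd0, ← hwdef, hw] at s1 s2 s3
    have hΔ : (μ₁ - μ₂) * (μ₂ - μ₃) * (μ₃ - μ₁) ≠ 0 :=
      mul_ne_zero (mul_ne_zero (sub_ne_zero.2 h12) (sub_ne_zero.2 h23))
        (sub_ne_zero.2 (fun hh => h13 hh.symm))
    have key : ψ x₀ * ((μ₁ - μ₂) * (μ₂ - μ₃) * (μ₃ - μ₁)) = 0 := by
      linear_combination (-(μ₂ - μ₃)) * s1 - (μ₃ - μ₁) * s2 - (μ₁ - μ₂) * s3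
    exact (mul_eq_zero.1 key).resolve_right hΔ
  · have hμ1 : μ₁ ≠ 0 := by
      intro h0; rw [h0, zero_mul] at r1
      exact hw ((mul_eq_zero.1 r1.symm).resolve_right (Complex.exp_ne_zero _))
    have hμ2 : μ₂ ≠ 0 := by
      intro h0; rw [h0, zero_mul] at r2
      exact hw ((mul_eq_zero.1 r2.symm).resolve_right (Complex.exp_ne_zero _))
    have hμ3 : μ₃ ≠ 0 := by
      intro h0; rw [h0, zero_mul] at r3
      exact hw ((mul_eq_zero.1 r3.symm).resolve_right (Complex.exp_ne_zero _))
    have hv : v ≠ 0 := by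
      intro h0; rw [h0, mul_zero] at r1
      exact hw ((mul_eq_zero.1 r1.symm).resolve_right (Complex.exp_ne_zero _))
    refine ⟨hL, -μ₁ * L, -μ₂ * L, pair_star hv r1 r2, ?_, ?_⟩
    · have hab : -(-μ₁ * (L:ℂ) + -μ₂ * (L:ℂ)) = -μ₃ * (L:ℂ) := by
        linear_combination ((L:ℂ)) * he1
      rw [hab]
      exact pair_star hv r2 r3
    · linear_combination (-((L:ℂ)^2)) * he2 + (-((L:ℂ)^2) * μ₃ + (L:ℂ)^2 * (μ₁+μ₂+μ₃)) * he1

lemma fwdC_distinct {lam : ℂ} {L : ℝ} (hL : 0 < L) {ψ : ℝ → ℂ}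
    (h : KdVSpectralODE lam L ψ) {μ₁ μ₂ μ₃ : ℂ}
    (he1 : μ₁ + μ₂ + μ₃ = 0) (he2 : μ₁ * μ₂ + μ₂ * μ₃ + μ₃ * μ₁ = 1)
    (hc1 : μ₁ ^ 3 + μ₁ + lam = 0) (hc2 : μ₂ ^ 3 + μ₂ + lam = 0) (hc3 : μ₃ ^ 3 + μ₃ + lam = 0)
    (h12 : μ₁ ≠ μ₂) (h23 : μ₂ ≠ μ₃) (h13 : μ₁ ≠ μ₃)
    (hb20 : iteratedDeriv 2 ψ 0 = 0) (hd0 : deriv ψ 0 = 0) (hbL : ψ L = 0)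
    (hb2L : iteratedDeriv 2 ψ L = 0)
    (hnt : ∃ x ∈ Icc (0:ℝ) L, ψ x ≠ 0) :
    L ∈ criticalNDagger := by
  set u := ψ 0 with hudef
  set v := deriv ψ L with hvdef
  have hLm : (L:ℝ) ∈ Icc (0:ℝ) L := ⟨hL.le, le_refl L⟩
  have t1 := theta_eq h hc1 hL.le L hLm
  have t2 := theta_eq h hc2 hL.le L hLm
  have t3 := theta_eq h hc3 hL.le L hLm
  rw [hb20, hd0, hbL, hb2L] at t1 t2 t3
  have r1 : μ₁ * v = (1 + μ₁ ^ 2) * u * Complex.exp (μ₁ * (L:ℂ)) := by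
    linear_combination t1
  have r2 : μ₂ * v = (1 + μ₂ ^ 2) * u * Complex.exp (μ₂ * (L:ℂ)) := by
    linear_combination t2
  have r3 : μ₃ * v = (1 + μ₃ ^ 2) * u * Complex.exp (μ₃ * (L:ℂ)) := by
    linear_combination t3
  by_cases hu : u = 0
  · exfalso
    obtain ⟨x₀, hx₀, hne⟩ := hnt
    apply hne
    have s1 := theta_eq h hc1 hL.le x₀ hx₀
    have s2 := theta_eq h hc2 hL.le x₀ hx₀
    have s3 := theta_eq h hc3 hL.le x₀ hx₀
    rw [hb20, hd0, ← hudef, hu] at s1 s2 s3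
    have hΔ : (μ₁ - μ₂) * (μ₂ - μ₃) * (μ₃ - μ₁) ≠ 0 :=
      mul_ne_zero (mul_ne_zero (sub_ne_zero.2 h12) (sub_ne_zero.2 h23))
        (sub_ne_zero.2 (fun hh => h13 hh.symm))
    have key : ψ x₀ * ((μ₁ - μ₂) * (μ₂ - μ₃) * (μ₃ - μ₁)) = 0 := by
      linear_combination (-(μ₂ - μ₃)) * s1 - (μ₃ - μ₁) * s2 - (μ₁ - μ₂) * s3
    exact (mul_eq_zero.1 key).resolve_right hΔ
  · -- u ≠ 0 : derive nonvanishing facts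
    have hv : v ≠ 0 := by
      intro h0
      rw [h0, mul_zero] at r1 r2 r3
      have q1 : 1 + μ₁ ^ 2 = 0 := by
        rcases mul_eq_zero.1 r1.symm with hq | hq
        · exact (mul_eq_zero.1 hq).resolve_right hu
        · exact absurd hq (Complex.exp_ne_zero _)
      have q2 : 1 + μ₂ ^ 2 = 0 := by
        rcases mul_eq_zero.1 r2.symm with hq | hq
        · exact (mul_eq_zero.1 hq).resolve_right hu
        · exact absurd hq (Complex.exp_ne_zero _)
      have q3 : 1 + μ₃ ^ 2 = 0 := by
        rcases mul_eq_zero.1 r3.symm with hq | hq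
        · exact (mul_eq_zero.1 hq).resolve_right hu
        · exact absurd hq (Complex.exp_ne_zero _)
      -- μ₂² = μ₃² and μ₂ ≠ μ₃ force μ₂ = -μ₃, then e1 gives μ₁ = 0, contradicting q1
      have h23' : μ₂ + μ₃ = 0 := by
        have : (μ₂ - μ₃) * (μ₂ + μ₃) = 0 := by linear_combination q2 - q3
        exact (mul_eq_zero.1 this).resolve_left (sub_ne_zero.2 h23)
      have hμ10 : μ₁ = 0 := by linear_combination he1 - h23'
      rw [hμ10] at q1
      simp at q1
    have hq1 : 1 + μ₁ ^ 2 ≠ 0 := by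
      intro h0; rw [h0, zero_mul, zero_mul] at r1
      rcases mul_eq_zero.1 r1 with hq | hq
      · rw [hq] at h0; simp at h0
      · exact hv hq
    have hq2 : 1 + μ₂ ^ 2 ≠ 0 := by
      intro h0; rw [h0, zero_mul, zero_mul] at r2
      rcases mul_eq_zero.1 r2 with hq | hq
      · rw [hq] at h0; simp at h0
      · exact hv hq
    have hq3 : 1 + μ₃ ^ 2 ≠ 0 := by
      intro h0; rw [h0, zero_mul, zero_mul] at r3
      rcases mul_eq_zero.1 r3 with hq | hq
      · rw [hq] at h0; simp at h0
      · exact hv hq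
    refine ⟨hL, -μ₁ * L, -μ₂ * L, pair_dagger hu hq1 hq2 hc1 hc2 r1 r2, ?_, ?_⟩
    · have hab : ((-μ₁ * (L:ℂ)) + (-μ₂ * (L:ℂ))) = μ₃ * (L:ℂ) := by
        linear_combination (-(L:ℂ)) * he1
      have hab2 : -((-μ₁ * (L:ℂ)) + (-μ₂ * (L:ℂ))) = -μ₃ * (L:ℂ) := by
        rw [hab]; ring
      rw [hab2, show ((-μ₁ * (L:ℂ)) + (-μ₂ * (L:ℂ))) ^ 2 = (-μ₃ * (L:ℂ)) ^ 2 by rw [← hab2]; ring]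
      exact pair_dagger hu hq2 hq3 hc2 hc3 r2 r3
    · linear_combination (-((L:ℂ)^2)) * he2 + (-((L:ℂ)^2) * μ₃ + (L:ℂ)^2 * (μ₁+μ₂+μ₃)) * he1


/-- Inhomogeneous first-order ODE `f' = r f + K e^{rx}` on an interval. -/
lemma ode1_inhom (r K : ℂ) {L : ℝ} (hL : 0 ≤ L) {f : ℝ → ℂ}
    (hf : ∀ x ∈ Icc (0 : ℝ) L, HasDerivAt f (r * f x + K * Complex.exp (r * x)) x) :
    ∀ x ∈ Icc (0 : ℝ) L, f x = (f 0 + K * x) * Complex.exp (r * x) := by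
  set g : ℝ → ℂ := fun x => f x * Complex.exp (-r * x) - K * x with hg
  have hgd : ∀ x ∈ Ico (0:ℝ) L, HasDerivWithinAt g 0 (Ici x) x := by
    intro x hx
    have hx' : x ∈ Icc (0:ℝ) L := ⟨hx.1, le_of_lt hx.2⟩
    have hid : HasDerivAt (fun t : ℝ => (t : ℂ)) 1 x := by
      simpa using (hasDerivAt_id x).ofReal_comp
    have hK : HasDerivAt (fun t : ℝ => K * (t : ℂ)) K x := by
      simpa using hid.const_mul K
    have hmain := ((hf x hx').mul (hasDerivAt_cexp_mul (-r) x)).sub hK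
    have h0 : (r * f x + K * Complex.exp (r * x)) * Complex.exp (-r * x)
        + f x * (-r * Complex.exp (-r * x)) - K = 0 := by
      have hee : Complex.exp (r * x) * Complex.exp (-r * x) = 1 := by
        rw [← Complex.exp_add]; ring_nf; exact Complex.exp_zero
      linear_combination K * hee
    rw [h0] at hmain
    exact hmain.hasDerivWithinAt
  have hgc : ContinuousOn g (Icc 0 L) := by
    intro x hx
    have hid : HasDerivAt (fun t : ℝ => (t : ℂ)) 1 x := by
      simpa using (hasDerivAt_id x).ofReal_comp
    have hK : HasDerivAt (fun t : ℝ => K * (t : ℂ)) K x := by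
      simpa using hid.const_mul K
    exact ((((hf x hx).mul (hasDerivAt_cexp_mul (-r) x)).sub hK).continuousAt).continuousWithinAt
  have hconst := constant_of_has_deriv_right_zero hgc hgd
  intro x hx
  have hcx := hconst x hx
  have h0 : g 0 = f 0 := by simp [hg]
  rw [h0] at hcx
  have heq : f x * Complex.exp (-r * x) = f 0 + K * x := by
    have : g x = f x * Complex.exp (-r * x) - K * x := rfl
    rw [this] at hcx; linear_combination hcx
  have hmul := congrArg (fun z => z * Complex.exp (r * x)) heq
  rwa [mul_assoc, ← Complex.exp_add, show -r * (x:ℂ) + r * x = 0 by ring,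
    Complex.exp_zero, mul_one] at hmul

/-- Repeated-root case for the 𝒩* problem: impossible. -/
lemma fwdB_repeated {lam : ℂ} {L : ℝ} (hL : 0 < L) {ψ : ℝ → ℂ}
    (h : KdVSpectralODE lam L ψ) {r : ℂ}
    (hr2 : r ^ 2 = -(1/3)) (hc : r ^ 3 + r + lam = 0)
    (hb0 : ψ 0 = 0) (hd0' : deriv ψ 0 = 0) (hbL : ψ L = 0)
    (hb2L : iteratedDeriv 2 ψ L = 0)
    (hnt : ∃ x ∈ Icc (0:ℝ) L, ψ x ≠ 0) : False := by
  obtain ⟨x₀, hx₀, hne⟩ := hnt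
  set w := iteratedDeriv 2 ψ 0 with hwdef
  have hθ := theta_eq h hc hL.le
  -- φ₂ = ψ' + 2rψ satisfies φ₂' = r φ₂ + θ_r, and θ_r x = w e^{rx}
  have hθ0 : iteratedDeriv 2 ψ 0 + r * deriv ψ 0 + (1 + r ^ 2) * ψ 0 = w := by
    rw [hb0, hd0']; ring
  have hφd : ∀ x ∈ Icc (0:ℝ) L, HasDerivAt (fun t => deriv ψ t + 2 * r * ψ t)
      (r * (deriv ψ x + 2 * r * ψ x) + w * Complex.exp (r * x)) x := by
    intro x hx
    have hD := (hd1 h.1 x).add ((hd0 h.1 x).const_mul (2 * r))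
    refine hD.congr_deriv ?_
    have hth := hθ x hx
    rw [hθ0] at hth
    -- iteratedDeriv 2 ψ x + 2r deriv ψ x = r(deriv + 2rψ) + θ_r x  using 1+3r² = 0
    have : iteratedDeriv 2 ψ x = w * Complex.exp (r * x) - r * deriv ψ x
        - (1 + r ^ 2) * ψ x := by linear_combination hth
    rw [this]
    linear_combination (-(3 * ψ x)) * hr2
  have hφeq := ode1_inhom r w hL.le hφd
  have hφ0 : deriv ψ 0 + 2 * r * ψ 0 = 0 := by rw [hb0, hd0']; ring
  by_cases hw : w = 0
  · -- ψ' + 2rψ ≡ 0, hence ψ ≡ 0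
    apply hne
    have hψd : ∀ x ∈ Icc (0:ℝ) L, HasDerivAt ψ (-(2*r) * ψ x) x := by
      intro x hx
      have := hφeq x hx
      rw [hφ0, hw] at this
      simp only [add_zero, mul_zero, zero_add, MulZeroClass.zero_mul] at this
      have hval : deriv ψ x = -(2*r) * ψ x := by linear_combination this
      exact (hd0 h.1 x).congr_deriv hval
    have := ode1_eq (-(2*r)) hL.le hψd x₀ hx₀
    rw [hb0] at this
    simpa using this
  · -- w ≠ 0: contradiction via rL = 1
    have hLm : (L:ℝ) ∈ Icc (0:ℝ) L := ⟨hL.le, le_refl L⟩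
    have e1 : deriv ψ L + 2 * r * ψ L = (0 + w * L) * Complex.exp (r * L) := by
      have := hφeq L hLm; rwa [hφ0] at this
    have e2 : iteratedDeriv 2 ψ L + r * deriv ψ L + (1 + r ^ 2) * ψ L
        = w * Complex.exp (r * L) := by
      have := hθ L hLm; rwa [hθ0] at this
    rw [hbL] at e1 e2
    rw [hb2L] at e2
    -- e1 : deriv ψ L = w L e^{rL},  e2 : r deriv ψ L = w e^{rL}
    have key : w * Complex.exp (r * L) * (r * L - 1) = 0 := by
      linear_combination e2 - r * e1
    have hrL : r * (L:ℂ) = 1 := by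
      rcases mul_eq_zero.1 key with hq | hq
      · exact absurd ((mul_eq_zero.1 hq).resolve_right (Complex.exp_ne_zero _)) hw
      · linear_combination hq
    have hL2 : ((L:ℂ)) ^ 2 = -3 := by
      have h1 : (r * L) ^ 2 = 1 := by rw [hrL]; ring
      have h2 : r ^ 2 * (L:ℂ) ^ 2 = 1 := by linear_combination h1
      rw [hr2] at h2
      linear_combination (-3 : ℂ) * h2
    have : (L:ℝ) ^ 2 = -3 := by
      have := hL2
      rw [show ((L:ℂ))^2 = ((L^2 : ℝ) : ℂ) by push_cast; ring] at this
      exact_mod_cast this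
    nlinarith [sq_nonneg L]

/-- Repeated-root case for the 𝒩† problem: impossible. -/
lemma fwdC_repeated {lam : ℂ} {L : ℝ} (hL : 0 < L) {ψ : ℝ → ℂ}
    (h : KdVSpectralODE lam L ψ) {r : ℂ}
    (hr2 : r ^ 2 = -(1/3)) (hc : r ^ 3 + r + lam = 0)
    (hb20 : iteratedDeriv 2 ψ 0 = 0) (hd0' : deriv ψ 0 = 0) (hbL : ψ L = 0)
    (hb2L : iteratedDeriv 2 ψ L = 0)
    (hnt : ∃ x ∈ Icc (0:ℝ) L, ψ x ≠ 0) : False := by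
  obtain ⟨x₀, hx₀, hne⟩ := hnt
  set u := ψ 0 with hudef
  have hθ := theta_eq h hc hL.le
  have hθ0 : iteratedDeriv 2 ψ 0 + r * deriv ψ 0 + (1 + r ^ 2) * ψ 0 = (1 + r ^ 2) * u := by
    rw [hb20, hd0']; ring
  have hφd : ∀ x ∈ Icc (0:ℝ) L, HasDerivAt (fun t => deriv ψ t + 2 * r * ψ t)
      (r * (deriv ψ x + 2 * r * ψ x) + ((1 + r ^ 2) * u) * Complex.exp (r * x)) x := by
    intro x hx
    have hD := (hd1 h.1 x).add ((hd0 h.1 x).const_mul (2 * r))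
    refine hD.congr_deriv ?_
    have hth := hθ x hx
    rw [hθ0] at hth
    have : iteratedDeriv 2 ψ x = (1 + r ^ 2) * u * Complex.exp (r * x) - r * deriv ψ x
        - (1 + r ^ 2) * ψ x := by linear_combination hth
    rw [this]
    linear_combination (-(3 * ψ x)) * hr2
  have hφeq := ode1_inhom r ((1 + r ^ 2) * u) hL.le hφd
  have hφ0 : deriv ψ 0 + 2 * r * ψ 0 = 2 * r * u := by rw [hd0']; ring
  by_cases hu : u = 0
  · apply hne
    have hψd : ∀ x ∈ Icc (0:ℝ) L, HasDerivAt ψ (-(2*r) * ψ x) x := by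
      intro x hx
      have := hφeq x hx
      rw [hφ0, hu] at this
      simp only [mul_zero, zero_mul, zero_add, add_zero] at this
      have hval : deriv ψ x = -(2*r) * ψ x := by linear_combination this
      exact (hd0 h.1 x).congr_deriv hval
    have := ode1_eq (-(2*r)) hL.le hψd x₀ hx₀
    rw [← hudef, hu] at this
    simpa using this
  · have hLm : (L:ℝ) ∈ Icc (0:ℝ) L := ⟨hL.le, le_refl L⟩
    have e1 : deriv ψ L + 2 * r * ψ L
        = (2 * r * u + (1 + r ^ 2) * u * L) * Complex.exp (r * L) := by
      have := hφeq L hLm; rw [hφ0] at this; linear_combination this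
    have e2 : iteratedDeriv 2 ψ L + r * deriv ψ L + (1 + r ^ 2) * ψ L
        = (1 + r ^ 2) * u * Complex.exp (r * L) := by
      have := hθ L hLm; rwa [hθ0] at this
    rw [hbL] at e1 e2
    rw [hb2L] at e2
    have key : u * Complex.exp (r * (L:ℂ)) * (2*r^2 + (1 + r^2) * (r*(L:ℂ) - 1)) = 0 := by
      linear_combination e2 - r * e1
    have key2 : u * Complex.exp (r * (L:ℂ)) * (r * (L:ℂ) - 2) = 0 := by
      linear_combination (3/2 : ℂ) * key
        + (-(3/2 : ℂ) * (r*(L:ℂ) + 1) * u * Complex.exp (r*(L:ℂ))) * hr2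
    have hrL : r * (L:ℂ) = 2 := by
      rcases mul_eq_zero.1 key2 with hq | hq
      · exact absurd ((mul_eq_zero.1 hq).resolve_right (Complex.exp_ne_zero _)) hu
      · linear_combination hq
    have hL2 : ((L:ℂ)) ^ 2 = -12 := by
      have h1 : (r * (L:ℂ)) ^ 2 = 4 := by rw [hrL]; ring
      have h2 : r ^ 2 * (L:ℂ) ^ 2 = 4 := by linear_combination h1
      rw [hr2] at h2
      linear_combination (-3 : ℂ) * h2
    have : (L:ℝ) ^ 2 = -12 := by
      have := hL2
      rw [show ((L:ℂ))^2 = ((L^2 : ℝ) : ℂ) by push_cast; ring] at this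
      exact_mod_cast this
    nlinarith [sq_nonneg L]


section construct
variable (μ₁ μ₂ μ₃ c₁ c₂ c₃ : ℂ)

noncomputable def trip : ℝ → ℂ := fun x =>
  c₁ * Complex.exp (μ₁ * x) + c₂ * Complex.exp (μ₂ * x) + c₃ * Complex.exp (μ₃ * x)

lemma trip_hasDerivAt (x : ℝ) :
    HasDerivAt (trip μ₁ μ₂ μ₃ c₁ c₂ c₃)
      (trip μ₁ μ₂ μ₃ (c₁ * μ₁) (c₂ * μ₂) (c₃ * μ₃) x) x := by
  have h := (((hasDerivAt_cexp_mul μ₁ x).const_mul c₁).add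
    ((hasDerivAt_cexp_mul μ₂ x).const_mul c₂)).add ((hasDerivAt_cexp_mul μ₃ x).const_mul c₃)
  refine h.congr_deriv ?_
  simp only [trip]; ring

lemma trip_deriv : deriv (trip μ₁ μ₂ μ₃ c₁ c₂ c₃)
    = trip μ₁ μ₂ μ₃ (c₁ * μ₁) (c₂ * μ₂) (c₃ * μ₃) :=
  funext fun x => (trip_hasDerivAt μ₁ μ₂ μ₃ c₁ c₂ c₃ x).deriv

lemma trip_deriv2 : iteratedDeriv 2 (trip μ₁ μ₂ μ₃ c₁ c₂ c₃)
    = trip μ₁ μ₂ μ₃ (c₁ * μ₁^2) (c₂ * μ₂^2) (c₃ * μ₃^2) := by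
  rw [iteratedDeriv_two_eq, trip_deriv, trip_deriv]
  congr 1 <;> ring

lemma trip_deriv3 : iteratedDeriv 3 (trip μ₁ μ₂ μ₃ c₁ c₂ c₃)
    = trip μ₁ μ₂ μ₃ (c₁ * μ₁^3) (c₂ * μ₂^3) (c₃ * μ₃^3) := by
  have h : iteratedDeriv 3 (trip μ₁ μ₂ μ₃ c₁ c₂ c₃)
      = deriv (iteratedDeriv 2 (trip μ₁ μ₂ μ₃ c₁ c₂ c₃)) := iteratedDeriv_succ
  rw [h, trip_deriv2, trip_deriv]
  congr 1 <;> ring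

lemma trip_contDiff : ContDiff ℝ 3 (trip μ₁ μ₂ μ₃ c₁ c₂ c₃) := by
  have hce : ∀ μ : ℂ, ContDiff ℝ 3 (fun x : ℝ => Complex.exp (μ * x)) := by
    intro μ
    have h1 : ContDiff ℝ 3 (fun x : ℝ => μ * (x:ℂ)) :=
      contDiff_const.mul Complex.ofRealCLM.contDiff
    exact (Complex.contDiff_exp (𝕜 := ℝ) (n := 3)).comp h1
  exact ((contDiff_const.mul (hce μ₁)).add (contDiff_const.mul (hce μ₂))).add
    (contDiff_const.mul (hce μ₃))

lemma trip_KdV {lam : ℂ} (L : ℝ)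
    (h1 : μ₁ ^ 3 + μ₁ + lam = 0) (h2 : μ₂ ^ 3 + μ₂ + lam = 0) (h3 : μ₃ ^ 3 + μ₃ + lam = 0) :
    KdVSpectralODE lam L (trip μ₁ μ₂ μ₃ c₁ c₂ c₃) := by
  refine ⟨trip_contDiff _ _ _ _ _ _, fun x _ => ?_⟩
  rw [trip_deriv, trip_deriv3]
  simp only [trip]
  linear_combination (c₁ * Complex.exp (μ₁ * x)) * h1 + (c₂ * Complex.exp (μ₂ * x)) * h2
    + (c₃ * Complex.exp (μ₃ * x)) * h3

lemma trip_apply (x : ℝ) : trip μ₁ μ₂ μ₃ c₁ c₂ c₃ x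
    = c₁ * Complex.exp (μ₁ * x) + c₂ * Complex.exp (μ₂ * x) + c₃ * Complex.exp (μ₃ * x) := rfl

lemma trip_zero : trip μ₁ μ₂ μ₃ c₁ c₂ c₃ 0 = c₁ + c₂ + c₃ := by
  simp [trip]

end construct


lemma re_zero_of_sq {L : ℝ} (hL : 0 < L) {z : ℂ} (hq : ((L:ℂ))^2 = -3 * z^2) : z.re = 0 := by
  rw [Complex.ext_iff] at hq
  obtain ⟨hre, him⟩ := hq
  simp only [pow_two, Complex.mul_re, Complex.mul_im, Complex.ofReal_re, Complex.ofReal_im,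
    Complex.neg_re, Complex.neg_im, Complex.mul_im,
    mul_zero, zero_mul, sub_zero, add_zero, zero_add, neg_zero, Complex.re_ofNat,
    Complex.im_ofNat] at hre him
  by_contra h0
  have h1 : z.im = 0 := by
    have h2 : z.re * z.im = 0 := by nlinarith [him]
    exact (mul_eq_zero.1 h2).resolve_left h0
  rw [h1] at hre
  have h3 : z.re * z.re > 0 := mul_self_pos.2 h0
  nlinarith [mul_pos hL hL]

lemma abs_exp3 {z : ℂ} (hre : z.re = 0) : ‖Complex.exp (3*z)‖ = 1 := by
  rw [Complex.norm_exp]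
  have : (3*z).re = 0 := by simp [Complex.mul_re, hre]
  rw [this, Real.exp_zero]

lemma star_coincide {L : ℝ} (hL : 0 < L) {z : ℂ} (hz : z ≠ 0)
    (h : z * Complex.exp z = -(2*z) * Complex.exp (-(2*z)))
    (hq : ((L:ℂ))^2 = -3 * z^2) : False := by
  have hmul : z * Complex.exp (3*z) = z * (-2) := by
    have e2 : Complex.exp (-(2*z)) * Complex.exp (2*z) = 1 := by
      rw [← Complex.exp_add]; simp
    have e1 : Complex.exp (3*z) = Complex.exp z * Complex.exp (2*z) := by
      rw [← Complex.exp_add]; ring_nf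
    rw [e1]
    linear_combination Complex.exp (2*z) * h + (-(2*z)) * e2
  have h3 : Complex.exp (3*z) = -2 := by
    have := mul_left_cancel₀ hz hmul
    linear_combination this
  have habs := congrArg norm h3
  rw [abs_exp3 (re_zero_of_sq hL hq)] at habs
  simp at habs

lemma dagger_coincide {L : ℝ} (hL : 0 < L) {z : ℂ} (hz : z ≠ 0)
    (h : z^2 * Complex.exp z = (2*z)^2 * Complex.exp (-(2*z)))
    (hq : ((L:ℂ))^2 = -3 * z^2) : False := by
  have hmul : z^2 * Complex.exp (3*z) = z^2 * 4 := by
    have e2 : Complex.exp (-(2*z)) * Complex.exp (2*z) = 1 := by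
      rw [← Complex.exp_add]; simp
    have e1 : Complex.exp (3*z) = Complex.exp z * Complex.exp (2*z) := by
      rw [← Complex.exp_add]; ring_nf
    rw [e1]
    linear_combination Complex.exp (2*z) * h + (4*z^2) * e2
  have h3 : Complex.exp (3*z) = 4 := by
    have := mul_left_cancel₀ (pow_ne_zero 2 hz) hmul
    linear_combination this
  have habs := congrArg norm h3
  rw [abs_exp3 (re_zero_of_sq hL hq)] at habs
  simp at habs


lemma backB {L : ℝ} (hL : 0 < L) (a b : ℂ)
    (h1 : a * Complex.exp a = b * Complex.exp b)
    (h2 : b * Complex.exp b = -(a + b) * Complex.exp (-(a + b)))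
    (hq : ((L:ℂ)) ^ 2 = -(a ^ 2 + a * b + b ^ 2)) : ReducedPb L := by
  have hA : ((L:ℂ)) ≠ 0 := Complex.ofReal_ne_zero.2 hL.ne'
  have hA2 : ((L:ℂ)) ^ 2 ≠ 0 := pow_ne_zero _ hA
  have hXne' : Complex.exp a ≠ 0 := Complex.exp_ne_zero a
  have hYne' : Complex.exp b ≠ 0 := Complex.exp_ne_zero b
  -- nonvanishing of a, b, a+b
  have ha : a ≠ 0 := by
    intro h0
    rw [h0] at h1
    simp only [zero_mul] at h1
    have hb0 : b = 0 := by
      rcases mul_eq_zero.1 h1.symm with h | h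
      · exact h
      · exact absurd h hYne'
    rw [h0, hb0] at hq
    simp at hq
    exact absurd hq hL.ne'
  have hb : b ≠ 0 := by
    intro h0
    rw [h0] at h1
    simp only [zero_mul] at h1
    have ha0 : a = 0 := by
      rcases mul_eq_zero.1 h1 with h | h
      · exact h
      · exact absurd h hXne'
    exact ha ha0
  have hab : a + b ≠ 0 := by
    intro h0
    rw [h0] at h2
    simp only [neg_zero, zero_mul] at h2
    have hb0 : b = 0 := by
      rcases mul_eq_zero.1 h2 with h | h
      · exact h
      · exact absurd h hYne'
    exact hb hb0
  -- coincidence exclusions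
  have hne_ab : a ≠ b := by
    intro h0
    rw [h0] at hq h2
    refine star_coincide hL hb ?_ (by linear_combination hq)
    rw [show -(2*b) = -(b+b) by ring]
    exact h2
  have h2ab : 2 * a + b ≠ 0 := by
    intro h0
    have hb' : b = -(2 * a) := by linear_combination h0
    rw [hb'] at h1 hq
    exact star_coincide hL ha h1 (by linear_combination hq)
  have hab2 : a + 2 * b ≠ 0 := by
    intro h0
    have ha' : a = -(2 * b) := by linear_combination h0
    rw [ha'] at h1 hq
    exact star_coincide hL hb h1.symm (by linear_combination hq)
  -- multiplicative identities
  set X := Complex.exp a with hXdef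
  set Y := Complex.exp b with hYdef
  have hXne : X ≠ 0 := Complex.exp_ne_zero a
  have hYne : Y ≠ 0 := Complex.exp_ne_zero b
  have hinv : Complex.exp (-(a + b)) * (X * Y) = 1 := by
    have h' : X * Y = Complex.exp (a + b) := by rw [hXdef, hYdef, ← Complex.exp_add]
    rw [h', ← Complex.exp_add, show (-(a + b) + (a + b) : ℂ) = 0 by ring, Complex.exp_zero]
  have h2'' : b * Y * (X * Y) = -(a + b) := by
    linear_combination (X * Y) * h2 + (-(a + b)) * hinv
  -- the two key polynomial identities
  have haP : a * (-(a + 2*b) * Y + (2*a + b) * X + (b - a) * X^2 * Y^2) = 0 := by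
    linear_combination ((2*a + b) + (b - a) * X * Y^2) * h1 + ((b - a) * Y) * h2''
  have hP : -(a + 2*b) * Y + (2*a + b) * X + (b - a) * X^2 * Y^2 = 0 :=
    (mul_eq_zero.1 haP).resolve_left ha
  have haP2 : a * (-(a + 2*b) * a^2 * Y + (2*a + b) * b^2 * X
      + (b - a) * (a + b)^2 * X^2 * Y^2) = 0 := by
    linear_combination ((2*a + b) * b^2 + (b - a) * (a + b)^2 * X * Y^2) * h1
      + ((b - a) * (a + b)^2 * Y) * h2''
  have hP2 : -(a + 2*b) * a^2 * Y + (2*a + b) * b^2 * X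
      + (b - a) * (a + b)^2 * X^2 * Y^2 = 0 :=
    (mul_eq_zero.1 haP2).resolve_left ha
  -- roots and coefficients
  set A := ((L:ℂ)) with hAdef
  set μ₁ : ℂ := -a / A with hμ1
  set μ₂ : ℂ := -b / A with hμ2
  set μ₃ : ℂ := (a + b) / A with hμ3
  set lam : ℂ := -(a * b * (a + b)) / A ^ 3 with hlam
  have hc1 : μ₁ ^ 3 + μ₁ + lam = 0 := by
    rw [hμ1, hlam]
    field_simp
    linear_combination (-a) * hq
  have hc2 : μ₂ ^ 3 + μ₂ + lam = 0 := by
    rw [hμ2, hlam]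
    field_simp
    linear_combination (-b) * hq
  have hc3 : μ₃ ^ 3 + μ₃ + lam = 0 := by
    rw [hμ3, hlam]
    field_simp
    linear_combination (a + b) * hq
  -- exp values at L
  have hμ1L : μ₁ * A = -a := by rw [hμ1]; field_simp
  have hμ2L : μ₂ * A = -b := by rw [hμ2]; field_simp
  have hμ3L : μ₃ * A = a + b := by rw [hμ3]; field_simp
  refine ⟨lam, trip μ₁ μ₂ μ₃ (-(a + 2*b)) (2*a + b) (b - a),
    trip_KdV _ _ _ _ _ _ L hc1 hc2 hc3, ?_, ?_, ?_, ?_, ?_⟩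
  · rw [trip_deriv, trip_zero]
    rw [hμ1, hμ2, hμ3]
    field_simp
    ring
  · show trip μ₁ μ₂ μ₃ _ _ _ (L:ℝ) = 0
    show -(a + 2*b) * Complex.exp (μ₁ * (L:ℝ)) + (2*a + b) * Complex.exp (μ₂ * (L:ℝ))
      + (b - a) * Complex.exp (μ₃ * (L:ℝ)) = 0
    rw [show (((L:ℝ):ℂ)) = A from rfl, hμ1L, hμ2L, hμ3L,
      Complex.exp_neg, Complex.exp_neg, Complex.exp_add, ← hXdef, ← hYdef]
    have hfin : -(a + 2*b) * X⁻¹ + (2*a + b) * Y⁻¹ + (b - a) * (X * Y)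
        = X⁻¹ * Y⁻¹ * (-(a + 2*b) * Y + (2*a + b) * X + (b - a) * X^2 * Y^2) := by
      field_simp
    rw [hfin, hP, mul_zero]
  · rw [trip_deriv2]
    show -(a + 2*b) * μ₁^2 * Complex.exp (μ₁ * (L:ℝ)) + (2*a + b) * μ₂^2 * Complex.exp (μ₂ * (L:ℝ))
      + (b - a) * μ₃^2 * Complex.exp (μ₃ * (L:ℝ)) = 0
    rw [show (((L:ℝ):ℂ)) = A from rfl, hμ1L, hμ2L, hμ3L,
      Complex.exp_neg, Complex.exp_neg, Complex.exp_add, ← hXdef, ← hYdef, hμ1, hμ2, hμ3]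
    have hfin : -(a + 2*b) * (-a / A)^2 * X⁻¹ + (2*a + b) * (-b / A)^2 * Y⁻¹
        + (b - a) * ((a + b) / A)^2 * (X * Y)
        = X⁻¹ * Y⁻¹ * (A^2)⁻¹ * (-(a + 2*b) * a^2 * Y + (2*a + b) * b^2 * X
          + (b - a) * (a + b)^2 * X^2 * Y^2) := by
      field_simp
    rw [hfin, hP2, mul_zero]
  · -- nontriviality
    by_contra hcon
    push_neg at hcon
    have hdiff := trip_contDiff μ₁ μ₂ μ₃ (-(a + 2*b)) (2*a + b) (b - a)
    have hd1 := deriv_zero_of_zero_on_Icc hL (hdiff.differentiable (by norm_num)) hcon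
    have hd2' : Differentiable ℝ (deriv (trip μ₁ μ₂ μ₃ (-(a + 2*b)) (2*a + b) (b - a))) := by
      have := hdiff.differentiable_iteratedDeriv 1 (by norm_num)
      rwa [iteratedDeriv_one] at this
    have hd2 := deriv_zero_of_zero_on_Icc hL hd2' hd1 0 ⟨le_refl 0, hL.le⟩
    rw [← iteratedDeriv_two_eq] at hd2
    rw [trip_deriv2, trip_zero] at hd2
    have hval : -(a + 2*b) * μ₁^2 + (2*a + b) * μ₂^2 + (b - a) * μ₃^2
        = (b - a) * (a + 2*b) * (2*a + b) / A^2 := by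
      rw [hμ1, hμ2, hμ3]; field_simp; ring
    rw [hval] at hd2
    exact (div_ne_zero (mul_ne_zero (mul_ne_zero (sub_ne_zero.2 (Ne.symm hne_ab)) hab2) h2ab)
      hA2) hd2
  · left
    rw [trip_zero]
    ring

lemma backC {L : ℝ} (hL : 0 < L) (a b : ℂ)
    (h1 : a ^ 2 * Complex.exp a = b ^ 2 * Complex.exp b)
    (h2 : b ^ 2 * Complex.exp b = (a + b) ^ 2 * Complex.exp (-(a + b)))
    (hq : ((L:ℂ)) ^ 2 = -(a ^ 2 + a * b + b ^ 2)) : ReducedPb L := by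
  have hA : ((L:ℂ)) ≠ 0 := Complex.ofReal_ne_zero.2 hL.ne'
  have hA2 : ((L:ℂ)) ^ 2 ≠ 0 := pow_ne_zero _ hA
  have hXne' : Complex.exp a ≠ 0 := Complex.exp_ne_zero a
  have hYne' : Complex.exp b ≠ 0 := Complex.exp_ne_zero b
  have ha : a ≠ 0 := by
    intro h0
    rw [h0] at h1
    simp only [ne_eq, OfNat.ofNat_ne_zero, not_false_eq_true, zero_pow, zero_mul] at h1
    have hb0 : b = 0 := by
      rcases mul_eq_zero.1 h1.symm with h | h
      · exact pow_eq_zero_iff (by norm_num) |>.1 h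
      · exact absurd h hYne'
    rw [h0, hb0] at hq
    simp at hq
    exact absurd hq hL.ne'
  have hb : b ≠ 0 := by
    intro h0
    rw [h0] at h1
    simp only [ne_eq, OfNat.ofNat_ne_zero, not_false_eq_true, zero_pow, zero_mul] at h1
    have ha0 : a = 0 := by
      rcases mul_eq_zero.1 h1 with h | h
      · exact pow_eq_zero_iff (by norm_num) |>.1 h
      · exact absurd h hXne'
    exact ha ha0
  have hab : a + b ≠ 0 := by
    intro h0
    rw [h0] at h2
    simp only [ne_eq, OfNat.ofNat_ne_zero, not_false_eq_true, zero_pow, zero_mul] at h2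
    have hb0 : b = 0 := by
      rcases mul_eq_zero.1 h2 with h | h
      · exact pow_eq_zero_iff (by norm_num) |>.1 h
      · exact absurd h hYne'
    exact hb hb0
  have hne_ab : a ≠ b := by
    intro h0
    rw [h0] at hq h2
    refine dagger_coincide hL hb ?_ (by linear_combination hq)
    rw [show (2*b : ℂ) = b + b by ring]
    exact h2
  have h2ab : 2 * a + b ≠ 0 := by
    intro h0
    have hb' : b = -(2 * a) := by linear_combination h0
    rw [hb'] at h1 hq
    rw [show ((-(2*a)) : ℂ)^2 = (2*a)^2 by ring] at h1
    exact dagger_coincide hL ha h1 (by linear_combination hq)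
  have hab2 : a + 2 * b ≠ 0 := by
    intro h0
    have ha' : a = -(2 * b) := by linear_combination h0
    rw [ha'] at h1 hq
    rw [show ((-(2*b)) : ℂ)^2 = (2*b)^2 by ring] at h1
    exact dagger_coincide hL hb h1.symm (by linear_combination hq)
  set X := Complex.exp a with hXdef
  set Y := Complex.exp b with hYdef
  have hXne : X ≠ 0 := Complex.exp_ne_zero a
  have hYne : Y ≠ 0 := Complex.exp_ne_zero b
  have hinv : Complex.exp (-(a + b)) * (X * Y) = 1 := by
    have h' : X * Y = Complex.exp (a + b) := by rw [hXdef, hYdef, ← Complex.exp_add]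
    rw [h', ← Complex.exp_add, show (-(a + b) + (a + b) : ℂ) = 0 by ring, Complex.exp_zero]
  have h2'' : b ^ 2 * Y * (X * Y) = (a + b) ^ 2 := by
    linear_combination (X * Y) * h2 + ((a + b) ^ 2) * hinv
  have haP : a ^ 2 * (-(b * (a + b) * (a + 2*b)) * Y + (a * (a + b) * (2*a + b)) * X
      + (a * b * (a - b)) * X^2 * Y^2) = 0 := by
    linear_combination ((a * (a + b) * (2*a + b)) + a * b * (a - b) * X * Y^2) * h1
      + (a * b * (a - b) * Y) * h2''
  have hP : -(b * (a + b) * (a + 2*b)) * Y + (a * (a + b) * (2*a + b)) * X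
      + (a * b * (a - b)) * X^2 * Y^2 = 0 :=
    (mul_eq_zero.1 haP).resolve_left (pow_ne_zero 2 ha)
  have haP2 : a ^ 2 * (-(b * (a + b) * (a + 2*b)) * a^2 * Y
      + (a * (a + b) * (2*a + b)) * b^2 * X
      + (a * b * (a - b)) * (a + b)^2 * X^2 * Y^2) = 0 := by
    linear_combination ((a * (a + b) * (2*a + b)) * b^2 + a * b * (a - b) * (a + b)^2 * X * Y^2) * h1
      + (a * b * (a - b) * (a + b)^2 * Y) * h2''
  have hP2 : -(b * (a + b) * (a + 2*b)) * a^2 * Y + (a * (a + b) * (2*a + b)) * b^2 * X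
      + (a * b * (a - b)) * (a + b)^2 * X^2 * Y^2 = 0 :=
    (mul_eq_zero.1 haP2).resolve_left (pow_ne_zero 2 ha)
  set A := ((L:ℂ)) with hAdef
  set μ₁ : ℂ := -a / A with hμ1
  set μ₂ : ℂ := -b / A with hμ2
  set μ₃ : ℂ := (a + b) / A with hμ3
  set lam : ℂ := -(a * b * (a + b)) / A ^ 3 with hlam
  have hc1 : μ₁ ^ 3 + μ₁ + lam = 0 := by
    rw [hμ1, hlam]
    field_simp
    linear_combination (-a) * hq
  have hc2 : μ₂ ^ 3 + μ₂ + lam = 0 := by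
    rw [hμ2, hlam]
    field_simp
    linear_combination (-b) * hq
  have hc3 : μ₃ ^ 3 + μ₃ + lam = 0 := by
    rw [hμ3, hlam]
    field_simp
    linear_combination (a + b) * hq
  have hμ1L : μ₁ * A = -a := by rw [hμ1]; field_simp
  have hμ2L : μ₂ * A = -b := by rw [hμ2]; field_simp
  have hμ3L : μ₃ * A = a + b := by rw [hμ3]; field_simp
  refine ⟨lam, trip μ₁ μ₂ μ₃ (-(b * (a + b) * (a + 2*b))) (a * (a + b) * (2*a + b))
    (a * b * (a - b)), trip_KdV _ _ _ _ _ _ L hc1 hc2 hc3, ?_, ?_, ?_, ?_, ?_⟩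
  · rw [trip_deriv, trip_zero]
    rw [hμ1, hμ2, hμ3]
    field_simp
    ring
  · show trip μ₁ μ₂ μ₃ _ _ _ (L:ℝ) = 0
    show -(b * (a + b) * (a + 2*b)) * Complex.exp (μ₁ * (L:ℝ))
      + (a * (a + b) * (2*a + b)) * Complex.exp (μ₂ * (L:ℝ))
      + (a * b * (a - b)) * Complex.exp (μ₃ * (L:ℝ)) = 0
    rw [show (((L:ℝ):ℂ)) = A from rfl, hμ1L, hμ2L, hμ3L,
      Complex.exp_neg, Complex.exp_neg, Complex.exp_add, ← hXdef, ← hYdef]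
    have hfin : -(b * (a + b) * (a + 2*b)) * X⁻¹ + (a * (a + b) * (2*a + b)) * Y⁻¹
        + (a * b * (a - b)) * (X * Y)
        = X⁻¹ * Y⁻¹ * (-(b * (a + b) * (a + 2*b)) * Y + (a * (a + b) * (2*a + b)) * X
          + (a * b * (a - b)) * X^2 * Y^2) := by
      field_simp
    rw [hfin, hP, mul_zero]
  · rw [trip_deriv2]
    show -(b * (a + b) * (a + 2*b)) * μ₁^2 * Complex.exp (μ₁ * (L:ℝ))
      + (a * (a + b) * (2*a + b)) * μ₂^2 * Complex.exp (μ₂ * (L:ℝ))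
      + (a * b * (a - b)) * μ₃^2 * Complex.exp (μ₃ * (L:ℝ)) = 0
    rw [show (((L:ℝ):ℂ)) = A from rfl, hμ1L, hμ2L, hμ3L,
      Complex.exp_neg, Complex.exp_neg, Complex.exp_add, ← hXdef, ← hYdef, hμ1, hμ2, hμ3]
    have hfin : -(b * (a + b) * (a + 2*b)) * (-a / A)^2 * X⁻¹
        + (a * (a + b) * (2*a + b)) * (-b / A)^2 * Y⁻¹
        + (a * b * (a - b)) * ((a + b) / A)^2 * (X * Y)
        = X⁻¹ * Y⁻¹ * (A^2)⁻¹ * (-(b * (a + b) * (a + 2*b)) * a^2 * Y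
          + (a * (a + b) * (2*a + b)) * b^2 * X
          + (a * b * (a - b)) * (a + b)^2 * X^2 * Y^2) := by
      field_simp
    rw [hfin, hP2, mul_zero]
  · refine ⟨0, ⟨le_refl 0, hL.le⟩, ?_⟩
    rw [trip_zero]
    have hval : -(b * (a + b) * (a + 2*b)) + (a * (a + b) * (2*a + b)) + (a * b * (a - b))
        = (a - b) * (a + 2*b) * (2*a + b) := by ring
    rw [hval]
    exact mul_ne_zero (mul_ne_zero (sub_ne_zero.2 hne_ab) hab2) h2ab
  · right
    rw [trip_deriv2, trip_zero]
    rw [hμ1, hμ2, hμ3]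
    field_simp
    ring


lemma fwd {L : ℝ} (hL : 0 < L) (h : ReducedPb L) :
    L ∈ criticalNStar ∪ criticalNDagger := by
  obtain ⟨lam, ψ, hK, hd0, hbL, hb2L, hnt, hcase⟩ := h
  obtain ⟨μ₁, μ₂, μ₃, he1, he2, hc1, hc2, hc3⟩ := roots_exist lam
  by_cases h12 : μ₁ = μ₂
  · exfalso
    rw [← h12] at he1 he2
    have hr2 : μ₁ ^ 2 = -(1/3) := by
      linear_combination (-(1/3 : ℂ)) * he2 + ((2/3 : ℂ) * μ₁) * he1
    rcases hcase with hb0 | hb20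
    · exact fwdB_repeated hL hK hr2 hc1 hb0 hd0 hbL hb2L hnt
    · exact fwdC_repeated hL hK hr2 hc1 hb20 hd0 hbL hb2L hnt
  · by_cases h13 : μ₁ = μ₃
    · exfalso
      rw [← h13] at he1 he2
      have hr2 : μ₁ ^ 2 = -(1/3) := by
        linear_combination (-(1/3 : ℂ)) * he2 + ((2/3 : ℂ) * μ₁) * he1
      rcases hcase with hb0 | hb20
      · exact fwdB_repeated hL hK hr2 hc1 hb0 hd0 hbL hb2L hnt
      · exact fwdC_repeated hL hK hr2 hc1 hb20 hd0 hbL hb2L hnt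
    · by_cases h23 : μ₂ = μ₃
      · exfalso
        rw [← h23] at he1 he2
        have hr2 : μ₂ ^ 2 = -(1/3) := by
          linear_combination (-(1/3 : ℂ)) * he2 + ((2/3 : ℂ) * μ₂) * he1
        rcases hcase with hb0 | hb20
        · exact fwdB_repeated hL hK hr2 hc2 hb0 hd0 hbL hb2L hnt
        · exact fwdC_repeated hL hK hr2 hc2 hb20 hd0 hbL hb2L hnt
      · rcases hcase with hb0 | hb20
        · exact Or.inl (fwdB_distinct hL hK he1 he2 hc1 hc2 hc3 h12 h23 h13 hb0 hd0 hbL hb2L hnt)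
        · exact Or.inr (fwdC_distinct hL hK he1 he2 hc1 hc2 hc3 h12 h23 h13 hb20 hd0 hbL hb2L hnt)


end KdVAux

open Set Complex in
theorem stmt9 (N : ℕ) (hN : 2 ≤ N) (L : ℝ) (hL : 0 < L) :
    (∃ lam : ℂ, ∃ φ : Fin N → ℝ → ℂ,
      (∀ j, KdVSpectralODE lam L (φ j)) ∧
      (∀ j, φ j 0 = φ ⟨0, by omega⟩ 0) ∧
      (∑ j, iteratedDeriv 2 (φ j) 0) = 0 ∧
      (∀ j, φ j L = 0) ∧
      (∀ j, deriv (φ j) 0 = 0) ∧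
      (∀ j, iteratedDeriv 2 (φ j) L = 0) ∧
      (∃ j, ∃ x ∈ Set.Icc (0 : ℝ) L, φ j x ≠ 0)) ↔
    L ∈ criticalNStar ∪ criticalNDagger := by
  constructor
  · intro h
    exact fwd hL (claimA1 N hN L hL h)
  · intro h
    apply claimA2 N hN L hL
    rcases h with h | h
    · obtain ⟨-, a, b, h1, h2, hq⟩ := h
      exact backB hL a b h1 h2 hq
    · obtain ⟨-, a, b, h1, h2, hq⟩ := h
      exact backC hL a b h1 h2 hq
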